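/- Let P be a finite projective plane of order N ≥ 3 and let O be a rigid oval of P, i.e., an oval such that every automorphism of P mapping O onto itself fixes every point of O. Then every automorphism of P mapping O onto itself is the identity automorphism. -/

import Mathlib

/-- A point-line incidence relation `I` is a projective plane if any two distinct
points lie on a unique common line, any two distinct lines meet in a unique point,
and there exist four points no three of which are incident with a common line. -/
structure IsProjectivePlane {P L : Type*} (I : P → L → Prop) : Prop where
  line_unique : ∀ p q : P, p ≠ q → ∃! M : L, I p M ∧ I q M
  point_unique : ∀ M N : L, M ≠ N → ∃! p : P, I p M ∧ I p N
  nondeg : ∃ a b c d : P, a ≠ b ∧ a ≠ c ∧ a ≠ d ∧ b ≠ c ∧ b ≠ d ∧ c ≠ d ∧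
    ∀ M : L, ¬(I a M ∧ I b M ∧ I c M) ∧ ¬(I a M ∧ I b M ∧ I d M) ∧
      ¬(I a M ∧ I c M ∧ I d M) ∧ ¬(I b M ∧ I c M ∧ I d M)

/-- Let `O` be a rigid oval of a finite projective plane of order `N ≥ 3`, i.e. an
oval such that every automorphism of the plane mapping `O` onto itself fixes every
point of `O`.  Then every automorphism of the plane mapping `O` onto itself is the
identity automorphism. -/
theorem automorphism_stabilizing_rigid_oval_is_identity {P L : Type*} [Finite P] [Finite L]
    (I : P → L → Prop) (hplane : IsProjectivePlane I)
    (N : ℕ) (hN : 3 ≤ N)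
    (horder_lines : ∀ M : L, Nat.card {p : P // I p M} = N + 1)
    (horder_points : ∀ p : P, Nat.card {M : L // I p M} = N + 1)
    (O : Set P) (hOcard : Nat.card O = N + 1)
    (hOarc : ∀ p ∈ O, ∀ q ∈ O, ∀ r ∈ O, p ≠ q → p ≠ r → q ≠ r →
      ∀ M : L, ¬(I p M ∧ I q M ∧ I r M))
    (hrigid : ∀ (σ : Equiv.Perm P) (τ : Equiv.Perm L),
      (∀ p M, I p M ↔ I (σ p) (τ M)) → (σ : P → P) '' O = O → ∀ p ∈ O, σ p = p) :
    ∀ (σ : Equiv.Perm P) (τ : Equiv.Perm L),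
      (∀ p M, I p M ↔ I (σ p) (τ M)) → (σ : P → P) '' O = O →
      (∀ p : P, σ p = p) ∧ (∀ M : L, τ M = M) := by
  classical
  -- uniqueness of the tangent line at a point of the oval
  have tangent_unique : ∀ p ∈ O, ∀ M₀ M₁ : L, I p M₀ → (∀ q ∈ O, I q M₀ → q = p) →
      I p M₁ → (∀ q ∈ O, I q M₁ → q = p) → M₀ = M₁ := by
    intro p hp M₀ M₁ h0 h0t h1 h1t
    by_contra hne
    have hline : ∀ q : ↥O, ∃ M : L, I p M ∧ ((q : P) ≠ p → I (q : P) M) ∧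
        ((q : P) = p → M = M₀) := by
      rintro ⟨q, hq⟩
      by_cases hqp : q = p
      · exact ⟨M₀, h0, fun h => absurd hqp h, fun _ => rfl⟩
      · obtain ⟨M, ⟨hpM, hqM⟩, _⟩ := hplane.line_unique p q (Ne.symm hqp)
        exact ⟨M, hpM, fun _ => hqM, fun h => absurd h hqp⟩
    choose f hf1 hf2 hf3 using hline
    set g : ↥O → {M : L // I p M} := fun q => ⟨f q, hf1 q⟩ with hg
    have hginj : Function.Injective g := by
      rintro ⟨q, hq⟩ ⟨q', hq'⟩ hqq'
      have hff : f ⟨q, hq⟩ = f ⟨q', hq'⟩ := congrArg Subtype.val hqq'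
      by_cases h1' : q = p
      · by_cases h2' : q' = p
        · exact Subtype.ext (h1'.trans h2'.symm)
        · exfalso
          have hM0 : f ⟨q', hq'⟩ = M₀ := hff ▸ hf3 ⟨q, hq⟩ h1'
          have : I q' M₀ := hM0 ▸ hf2 ⟨q', hq'⟩ h2'
          exact h2' (h0t q' hq' this)
      · by_cases h2' : q' = p
        · exfalso
          have hM0 : f ⟨q, hq⟩ = M₀ := hff ▸ hf3 ⟨q', hq'⟩ h2'
          have : I q M₀ := hM0 ▸ hf2 ⟨q, hq⟩ h1'
          exact h1' (h0t q hq this)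
        · by_contra hne'
          have hqq : q ≠ q' := fun h => hne' (Subtype.ext h)
          have hIq : I q (f ⟨q, hq⟩) := hf2 ⟨q, hq⟩ h1'
          have hIq' : I q' (f ⟨q, hq⟩) := hff ▸ hf2 ⟨q', hq'⟩ h2'
          exact hOarc p hp q hq q' hq' (Ne.symm h1') (Ne.symm h2') hqq (f ⟨q, hq⟩)
            ⟨hf1 ⟨q, hq⟩, hIq, hIq'⟩
    have hcard : Nat.card ↥O = Nat.card {M : L // I p M} := by
      rw [hOcard, horder_points]
    have hgbij : Function.Bijective g :=
      (Nat.bijective_iff_injective_and_card g).mpr ⟨hginj, hcard⟩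
    obtain ⟨⟨q, hq⟩, hgq⟩ := hgbij.2 ⟨M₁, h1⟩
    have hfq : f ⟨q, hq⟩ = M₁ := congrArg Subtype.val hgq
    by_cases hqp : q = p
    · exact hne ((hf3 ⟨q, hq⟩ hqp).symm.trans hfq)
    · have : I q M₁ := hfq ▸ hf2 ⟨q, hq⟩ hqp
      exact hqp (h1t q hq this)
  intro σ τ hcomp hO
  have hfixO : ∀ p ∈ O, σ p = p := hrigid σ τ hcomp hO
  -- a line through two fixed points is fixed
  have lfix : ∀ (M : L) (p q : P), p ≠ q → I p M → I q M → σ p = p → σ q = q →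
      τ M = M := by
    intro M p q hpq hpM hqM hfp hfq
    have h1 : I p (τ M) := by have := (hcomp p M).mp hpM; rwa [hfp] at this
    have h2 : I q (τ M) := by have := (hcomp q M).mp hqM; rwa [hfq] at this
    obtain ⟨M', _, huniq⟩ := hplane.line_unique p q hpq
    rw [huniq (τ M) ⟨h1, h2⟩, huniq M ⟨hpM, hqM⟩]
  -- a point on two fixed lines is fixed
  have pfix : ∀ (x : P) (M N' : L), M ≠ N' → I x M → I x N' → τ M = M → τ N' = N' →
      σ x = x := by
    intro x M N' hMN hxM hxN hfM hfN
    have h1 : I (σ x) M := by have := (hcomp x M).mp hxM; rwa [hfM] at this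
    have h2 : I (σ x) N' := by have := (hcomp x N').mp hxN; rwa [hfN] at this
    obtain ⟨x', _, huniq⟩ := hplane.point_unique M N' hMN
    rw [huniq (σ x) ⟨h1, h2⟩, huniq x ⟨hxM, hxN⟩]
  -- every line meeting the oval is fixed
  have line_meet_fix : ∀ M : L, ∀ p ∈ O, I p M → τ M = M := by
    intro M p hp hpM
    by_cases hsec : ∃ q ∈ O, q ≠ p ∧ I q M
    · obtain ⟨q, hq, hqp, hqM⟩ := hsec
      exact lfix M p q (Ne.symm hqp) hpM hqM (hfixO p hp) (hfixO q hq)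
    · push_neg at hsec
      have htan : ∀ q ∈ O, I q M → q = p := by
        intro q hq hqM
        by_contra h
        exact hsec q hq h hqM
      have h1 : I p (τ M) := by
        have := (hcomp p M).mp hpM; rwa [hfixO p hp] at this
      have h2 : ∀ q ∈ O, I q (τ M) → q = p := by
        intro q hq hqτ
        have hσ : I (σ q) (τ M) := by rwa [hfixO q hq]
        exact htan q hq ((hcomp q M).mpr hσ)
      exact (tangent_unique p hp (τ M) M h1 h2 hpM htan)
  -- three distinct points of the oval
  have hOfin : O.Finite := Set.toFinite O
  have hOn : O.ncard = N + 1 := by rw [← Nat.card_coe_set_eq, hOcard]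
  have hOne : O.Nonempty := by
    apply Set.nonempty_of_ncard_ne_zero; omega
  obtain ⟨a, ha⟩ := hOne
  have hdiff : (O \ {a}).ncard = N := by
    rw [Set.ncard_diff_singleton_of_mem ha, hOn]
    omega
  have h2 : ∃ b c, b ∈ O \ {a} ∧ c ∈ O \ {a} ∧ b ≠ c := by
    rw [← Set.one_lt_ncard_iff hOfin.diff, hdiff]
    omega
  obtain ⟨b, c, hb, hc, hbc⟩ := h2
  have hbO : b ∈ O := hb.1
  have hcO : c ∈ O := hc.1
  have hab : a ≠ b := fun h => hb.2 h.symm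
  have hac : a ≠ c := fun h => hc.2 h.symm
  -- every point is fixed
  have all_points : ∀ x : P, σ x = x := by
    intro x
    by_cases hx : x ∈ O
    · exact hfixO x hx
    · have hxa : x ≠ a := fun h => hx (h ▸ ha)
      have hxb : x ≠ b := fun h => hx (h ▸ hbO)
      have hxc : x ≠ c := fun h => hx (h ▸ hcO)
      obtain ⟨Ma, ⟨hxMa, haMa⟩, _⟩ := hplane.line_unique x a hxa
      obtain ⟨Mb, ⟨hxMb, hbMb⟩, _⟩ := hplane.line_unique x b hxb
      obtain ⟨Mc, ⟨hxMc, hcMc⟩, _⟩ := hplane.line_unique x c hxc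
      by_cases hMaMb : Ma = Mb
      · have hMaMc : Ma ≠ Mc := by
          rintro rfl
          exact hOarc a ha b hbO c hcO hab hac hbc Ma ⟨haMa, hMaMb ▸ hbMb, hcMc⟩
        exact pfix x Ma Mc hMaMc hxMa hxMc (line_meet_fix Ma a ha haMa)
          (line_meet_fix Mc c hcO hcMc)
      · exact pfix x Ma Mb hMaMb hxMa hxMb (line_meet_fix Ma a ha haMa)
          (line_meet_fix Mb b hbO hbMb)
  refine ⟨all_points, fun M => ?_⟩
  have hcard2 : 1 < Nat.card {p : P // I p M} := by rw [horder_lines]; omega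
  have : Nontrivial {p : P // I p M} := Finite.one_lt_card_iff_nontrivial.mp hcard2
  obtain ⟨⟨p, hp⟩, ⟨q, hq⟩, hpq⟩ := this
  have hpq' : p ≠ q := fun h => hpq (Subtype.ext h)
  exact lfix M p q hpq' hp hq (all_points p) (all_points q)
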